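/- arXiv:1508.01000 — 2 statements merged into one kernel-verified Lean document; each statement's English description precedes it below -/
import Mathlib

section
/- Let n, m, p ≥ 1; for j = 1, …, m let Q_j ∈ ℝⁿˣⁿ be symmetric positive semidefinite, and for i = 0, 1, …, p let a_{ij} ∈ {−1, 0, 1}, b_i ∈ ℝⁿ, c_i ∈ ℝ, g_i(x) = Σ_{j=1}^m a_{ij} xᵀQ_j x + 2 b_iᵀx + c_i, and let l_i ∈ ℝ ∪ {−∞}, u_i ∈ ℝ ∪ {+∞} with l_i ≤ u_i. Let K = { j ∈ {1, …, m} : a_{0j} = −1, or a_{ij} ≠ 0 for some i ∈ {1, …, p} }. Consider (QCQP): minimize g₀(x) over x ∈ ℝⁿ subject to l_i ≤ g_i(x) ≤ u_i for i = 1, …, p, and its relaxation (CR'): minimize Σ_{j∉K} a_{0j} xᵀQ_j x + Σ_{j∈K} a_{0j} t_j + 2 b₀ᵀx + c₀ over x ∈ ℝⁿ and (t_j)_{j∈K} subject to l_i ≤ Σ_{j∈K} a_{ij} t_j + 2 b_iᵀx + c_i ≤ u_i for i = 1, …, p and xᵀQ_j x ≤ t_j for each j ∈ K. Suppose that for every j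 ∈ K, the dimension of the span of span{b₁, …, b_p} ∪ N(Q_j) ∪ ⋃_{i ∈ {1,…,m}, i ≠ j} R(Q_i) is at most n − 1, and that the optimal value of (CR') is > −∞. Then x* is a global minimizer of (QCQP) if and only if (x*, (x*ᵀQ_j x*)_{j∈K}) is a global minimizer of (CR'). -/
open Matrix

noncomputable section

/-- The quadratic form `xᵀ M x`. -/
def qf {n : ℕ} (M : Matrix (Fin n) (Fin n) ℝ) (x : Fin n → ℝ) : ℝ := x ⬝ᵥ (M *ᵥ x)

lemma stmt8_exists_perp {n : ℕ} (hn : 1 ≤ n) (W : Submodule ℝ (Fin n → ℝ))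
    (hW : Module.finrank ℝ W ≤ n - 1) :
    ∃ d : Fin n → ℝ, d ≠ 0 ∧ (∀ w ∈ W, w ⬝ᵥ d = 0) := by
  let W' : Submodule ℝ (EuclideanSpace ℝ (Fin n)) := W.map ((WithLp.linearEquiv 2 ℝ (Fin n → ℝ)).symm.toLinearMap :
    (Fin n → ℝ) →ₗ[ℝ] EuclideanSpace ℝ (Fin n))
  have h1 : Module.finrank ℝ W' + Module.finrank ℝ W'ᗮ = n := by
    rw [Submodule.finrank_add_finrank_orthogonal]
    simp [finrank_euclideanSpace]
  have hfr : Module.finrank ℝ W' = Module.finrank ℝ W := LinearEquiv.finrank_map_eq _ _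
  have h2 : 0 < Module.finrank ℝ W'ᗮ := by omega
  obtain ⟨d, hd, hd0⟩ := Submodule.exists_mem_ne_zero_of_ne_bot (p := W'ᗮ) (by
      intro h; rw [h] at h2; simp at h2)
  refine ⟨d.ofLp, by simpa using hd0, fun w hw => ?_⟩
  have := (Submodule.mem_orthogonal W' d).mp hd _ (Submodule.mem_map_of_mem hw)
  rw [dotProduct_comm]; exact this

lemma stmt8_sym_dot {n : ℕ} {M : Matrix (Fin n) (Fin n) ℝ} (hM : Mᵀ = M) (x y : Fin n → ℝ) :
    x ⬝ᵥ (M *ᵥ y) = y ⬝ᵥ (M *ᵥ x) := by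
  rw [dotProduct_mulVec, ← mulVec_transpose, hM, dotProduct_comm]

lemma stmt8_dot_sum {n : ℕ} {ι : Type*} (v : Fin n → ℝ) (s : Finset ι) (f : ι → Fin n → ℝ) :
    v ⬝ᵥ (∑ i ∈ s, f i) = ∑ i ∈ s, v ⬝ᵥ f i := by
  simp only [dotProduct, Finset.sum_apply, Finset.mul_sum]
  rw [Finset.sum_comm]

lemma stmt8_mulVec_sum {n : ℕ} {ι : Type*} (M : Matrix (Fin n) (Fin n) ℝ) (s : Finset ι)
    (f : ι → Fin n → ℝ) : M *ᵥ (∑ i ∈ s, f i) = ∑ i ∈ s, M *ᵥ f i :=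
  map_sum M.mulVecLin f s

lemma stmt8_exists_root (q r δ β : ℝ) (hq : 0 < q) (hδ : 0 ≤ δ) :
    ∃ s : ℝ, q * s ^ 2 + 2 * r * s = δ ∧ s * β ≤ 0 := by
  have hD2 : (Real.sqrt (r ^ 2 + q * δ)) ^ 2 = r ^ 2 + q * δ := by
    rw [Real.sq_sqrt]; positivity
  have hDr : |r| ≤ Real.sqrt (r ^ 2 + q * δ) := by
    rw [← Real.sqrt_sq_eq_abs]
    exact Real.sqrt_le_sqrt (by nlinarith)
  set D := Real.sqrt (r ^ 2 + q * δ) with hD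
  rcases le_or_gt 0 β with hβ | hβ
  · refine ⟨(-r - D) / q, ?_, ?_⟩
    · field_simp; nlinarith
    · have : (-r - D) / q ≤ 0 := by
        apply div_nonpos_of_nonpos_of_nonneg _ hq.le
        cases abs_cases r with
        | inl h => nlinarith
        | inr h => nlinarith
      exact mul_nonpos_of_nonpos_of_nonneg this hβ
  · refine ⟨(-r + D) / q, ?_, ?_⟩
    · field_simp; nlinarith
    · have : 0 ≤ (-r + D) / q := by
        apply div_nonneg _ hq.le
        cases abs_cases r with
        | inl h => nlinarith
        | inr h => nlinarith
      exact mul_nonpos_of_nonneg_of_nonpos this hβ.le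

lemma stmt8_exists_dir {n m p : ℕ} (hn : 1 ≤ n)
    (Q : Fin m → Matrix (Fin n) (Fin n) ℝ) (hQ : ∀ j, (Q j).PosSemidef)
    (b : Fin p → Fin n → ℝ) (j : Fin m)
    (hdim : Module.finrank ℝ
        ↥(Submodule.span ℝ (Set.range b) ⊔ LinearMap.ker (Q j).mulVecLin ⊔
            ⨆ i : Fin m, ⨆ _ : i ≠ j, LinearMap.range (Q i).mulVecLin) ≤ n - 1) :
    ∃ d : Fin n → ℝ, (∀ i, b i ⬝ᵥ d = 0) ∧ (∀ i, i ≠ j → Q i *ᵥ d = 0) ∧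
      0 < d ⬝ᵥ (Q j *ᵥ d) := by
  set W := Submodule.span ℝ (Set.range b) ⊔ LinearMap.ker (Q j).mulVecLin ⊔
      ⨆ i : Fin m, ⨆ _ : i ≠ j, LinearMap.range (Q i).mulVecLin with hWdef
  obtain ⟨d, hd0, hd⟩ := stmt8_exists_perp hn W hdim
  have hsym : ∀ i, (Q i)ᵀ = Q i := fun i => by
    have := (hQ i).1
    rwa [Matrix.IsHermitian, conjTranspose_eq_transpose_of_trivial] at this
  have hbW : ∀ i, b i ∈ W := fun i => by
    apply Submodule.mem_sup_left; apply Submodule.mem_sup_left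
    exact Submodule.subset_span (Set.mem_range_self i)
  have hkerW : LinearMap.ker (Q j).mulVecLin ≤ W :=
    le_trans le_sup_right le_sup_left
  have hrangeW : ∀ i, i ≠ j → LinearMap.range (Q i).mulVecLin ≤ W := fun i hij =>
    le_trans (le_iSup₂ (f := fun i (_ : i ≠ j) => LinearMap.range (Q i).mulVecLin) i hij)
      le_sup_right
  have hQi0 : ∀ i, i ≠ j → Q i *ᵥ d = 0 := by
    intro i hij
    have hmem : Q i *ᵥ (Q i *ᵥ d) ∈ W :=
      hrangeW i hij ⟨Q i *ᵥ d, by simp [mulVecLin_apply]⟩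
    have h0 : (Q i *ᵥ (Q i *ᵥ d)) ⬝ᵥ d = 0 := hd _ hmem
    have : (Q i *ᵥ d) ⬝ᵥ (Q i *ᵥ d) = 0 := by
      rw [stmt8_sym_dot (hsym i) (Q i *ᵥ d) d, dotProduct_comm]; exact h0
    exact dotProduct_self_eq_zero.mp this
  refine ⟨d, ?_, hQi0, ?_⟩
  · intro i
    exact hd (b i) (hbW i)
  have hQjd : Q j *ᵥ d ≠ 0 := by
    intro h
    have : d ∈ W := hkerW (by simpa [LinearMap.mem_ker, mulVecLin_apply] using h)
    exact hd0 (dotProduct_self_eq_zero.mp (by rw [dotProduct_comm]; exact hd d this))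
  have hnn : 0 ≤ d ⬝ᵥ (Q j *ᵥ d) := by simpa using (hQ j).dotProduct_mulVec_nonneg d
  have hne : d ⬝ᵥ (Q j *ᵥ d) ≠ 0 := by
    intro h
    exact hQjd (((hQ j).dotProduct_mulVec_zero_iff d).mp (by simpa using h))
  exact lt_of_le_of_ne hnn (Ne.symm hne)

lemma stmt8_construct {n m p : ℕ} (hn : 1 ≤ n)
    (Q : Fin m → Matrix (Fin n) (Fin n) ℝ) (hQ : ∀ j, (Q j).PosSemidef)
    (b0 : Fin n → ℝ) (b : Fin p → Fin n → ℝ) (K : Finset (Fin m))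
    (hdim : ∀ j ∈ K,
      Module.finrank ℝ
        ↥(Submodule.span ℝ (Set.range b) ⊔ LinearMap.ker (Q j).mulVecLin ⊔
            ⨆ i : Fin m, ⨆ _ : i ≠ j, LinearMap.range (Q i).mulVecLin) ≤ n - 1)
    (x : Fin n → ℝ) (t : Fin m → ℝ) (ht : ∀ j ∈ K, qf (Q j) x ≤ t j) :
    ∃ x' : Fin n → ℝ, (∀ j ∈ K, qf (Q j) x' = t j) ∧ (∀ j ∉ K, qf (Q j) x' = qf (Q j) x) ∧
      (∀ i, b i ⬝ᵥ x' = b i ⬝ᵥ x) ∧ b0 ⬝ᵥ x' ≤ b0 ⬝ᵥ x := by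
  have hsym : ∀ i, (Q i)ᵀ = Q i := fun i => by
    have := (hQ i).1
    rwa [Matrix.IsHermitian, conjTranspose_eq_transpose_of_trivial] at this
  have hd : ∀ j : Fin m, ∃ d : Fin n → ℝ, j ∈ K →
      ((∀ i, b i ⬝ᵥ d = 0) ∧ (∀ i, i ≠ j → Q i *ᵥ d = 0) ∧ 0 < d ⬝ᵥ (Q j *ᵥ d)) := by
    intro j
    by_cases hj : j ∈ K
    · exact (stmt8_exists_dir hn Q hQ b j (hdim j hj)).imp (fun d h _ => h)
    · exact ⟨0, fun h => absurd h hj⟩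
  choose d hdp using hd
  have hs : ∀ j : Fin m, ∃ s : ℝ, j ∈ K →
      ((d j ⬝ᵥ (Q j *ᵥ d j)) * s ^ 2 + 2 * (d j ⬝ᵥ (Q j *ᵥ x)) * s = t j - qf (Q j) x ∧
        s * (b0 ⬝ᵥ d j) ≤ 0) := by
    intro j
    by_cases hj : j ∈ K
    · obtain ⟨s, h1, h2⟩ := stmt8_exists_root (d j ⬝ᵥ (Q j *ᵥ d j)) (d j ⬝ᵥ (Q j *ᵥ x))
        (t j - qf (Q j) x) (b0 ⬝ᵥ d j) ((hdp j hj).2.2) (by linarith [ht j hj])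
      exact ⟨s, fun _ => ⟨h1, h2⟩⟩
    · exact ⟨0, fun h => absurd h hj⟩
  choose s hsp using hs
  set S : Fin n → ℝ := ∑ j ∈ K, s j • d j with hS
  have hQS : ∀ j', Q j' *ᵥ S = if j' ∈ K then s j' • (Q j' *ᵥ d j') else 0 := by
    intro j'
    rw [hS, stmt8_mulVec_sum]
    by_cases hj' : j' ∈ K
    · rw [if_pos hj']
      rw [Finset.sum_eq_single_of_mem j' hj']
      · rw [mulVec_smul]
      · intro k hk hkj
        rw [mulVec_smul, (hdp k hk).2.1 j' (Ne.symm hkj), smul_zero]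
    · rw [if_neg hj']
      apply Finset.sum_eq_zero
      intro k hk
      rw [mulVec_smul, (hdp k hk).2.1 j' (by rintro rfl; exact hj' hk), smul_zero]
  refine ⟨x + S, ?_, ?_, ?_, ?_⟩
  · intro j hj
    have hQSj : Q j *ᵥ S = s j • (Q j *ᵥ d j) := by rw [hQS, if_pos hj]
    have key : qf (Q j) (x + S) = qf (Q j) x
        + ((d j ⬝ᵥ (Q j *ᵥ d j)) * (s j) ^ 2 + 2 * (d j ⬝ᵥ (Q j *ᵥ x)) * (s j)) := by
      unfold qf
      rw [mulVec_add, dotProduct_add, add_dotProduct, add_dotProduct, hQSj]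
      have e1 : x ⬝ᵥ (s j • (Q j *ᵥ d j)) = s j * (d j ⬝ᵥ (Q j *ᵥ x)) := by
        rw [dotProduct_smul, stmt8_sym_dot (hsym j) x (d j)]; ring_nf
      have e2 : S ⬝ᵥ (Q j *ᵥ x) = s j * (d j ⬝ᵥ (Q j *ᵥ x)) := by
        rw [stmt8_sym_dot (hsym j) S x, hQSj, dotProduct_smul,
          stmt8_sym_dot (hsym j) x (d j)]
        rfl
      have e3 : S ⬝ᵥ (s j • (Q j *ᵥ d j)) = (d j ⬝ᵥ (Q j *ᵥ d j)) * (s j) ^ 2 := by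
        rw [dotProduct_smul]
        have : S ⬝ᵥ (Q j *ᵥ d j) = s j * (d j ⬝ᵥ (Q j *ᵥ d j)) := by
          rw [stmt8_sym_dot (hsym j) S (d j), hQSj, dotProduct_smul]; rfl
        rw [this, smul_eq_mul]; ring
      rw [e1, e2, e3]; ring
    rw [key, (hsp j hj).1]; ring
  · intro j hj
    have hQSj : Q j *ᵥ S = 0 := by rw [hQS, if_neg hj]
    unfold qf
    rw [mulVec_add, dotProduct_add, add_dotProduct, add_dotProduct, hQSj]
    have e2 : S ⬝ᵥ (Q j *ᵥ x) = 0 := by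
      rw [stmt8_sym_dot (hsym j) S x, hQSj, dotProduct_zero]
    simp [e2]
  · intro i
    rw [dotProduct_add, hS, stmt8_dot_sum]
    have : ∀ k ∈ K, b i ⬝ᵥ (s k • d k) = 0 := by
      intro k hk
      rw [dotProduct_smul, (hdp k hk).1 i, smul_zero]
    rw [Finset.sum_congr rfl this, Finset.sum_const, smul_zero, add_zero]
  · rw [dotProduct_add, hS, stmt8_dot_sum]
    have : ∑ k ∈ K, b0 ⬝ᵥ (s k • d k) ≤ 0 := by
      apply Finset.sum_nonpos
      intro k hk
      rw [dotProduct_smul]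
      simpa [smul_eq_mul] using (hsp k hk).2
    linarith

/-- equivalence of the two-sided QCQP and its convex relaxation (CR'). -/
theorem stmt8 (n m p : ℕ) (hn : 1 ≤ n) (hm : 1 ≤ m) (hp : 1 ≤ p)
    (Q : Fin m → Matrix (Fin n) (Fin n) ℝ) (hQ : ∀ j, (Q j).PosSemidef)
    (a0 : Fin m → ℝ) (a : Fin p → Fin m → ℝ)
    (ha0 : ∀ j, a0 j = -1 ∨ a0 j = 0 ∨ a0 j = 1)
    (ha : ∀ i j, a i j = -1 ∨ a i j = 0 ∨ a i j = 1)
    (b0 : Fin n → ℝ) (b : Fin p → Fin n → ℝ) (c0 : ℝ) (c : Fin p → ℝ)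
    (l u : Fin p → EReal)
    (hl : ∀ i, l i ≠ ⊤) (hu : ∀ i, u i ≠ ⊥) (hlu : ∀ i, l i ≤ u i)
    (K : Finset (Fin m))
    (hK : ∀ j, j ∈ K ↔ (a0 j = -1 ∨ ∃ i, a i j ≠ 0))
    (hdim : ∀ j ∈ K,
      Module.finrank ℝ
        ↥(Submodule.span ℝ (Set.range b) ⊔ LinearMap.ker (Q j).mulVecLin ⊔
            ⨆ i : Fin m, ⨆ _ : i ≠ j, LinearMap.range (Q i).mulVecLin) ≤ n - 1)
    (hCR : sInf ((fun q : (Fin n → ℝ) × (Fin m → ℝ) =>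
        (((∑ j ∈ Kᶜ, a0 j * qf (Q j) q.1) + (∑ j ∈ K, a0 j * q.2 j)
            + 2 * (b0 ⬝ᵥ q.1) + c0 : ℝ) : EReal)) ''
      {q | (∀ i, l i ≤ (((∑ j ∈ K, a i j * q.2 j) + 2 * (b i ⬝ᵥ q.1) + c i : ℝ) : EReal) ∧
              (((∑ j ∈ K, a i j * q.2 j) + 2 * (b i ⬝ᵥ q.1) + c i : ℝ) : EReal) ≤ u i) ∧
           (∀ j ∈ K, qf (Q j) q.1 ≤ q.2 j)}) ≠ ⊥)
    (xs : Fin n → ℝ) :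
    -- `xs` globally solves (QCQP)
    ((∀ i, l i ≤ (((∑ j, a i j * qf (Q j) xs) + 2 * (b i ⬝ᵥ xs) + c i : ℝ) : EReal) ∧
        (((∑ j, a i j * qf (Q j) xs) + 2 * (b i ⬝ᵥ xs) + c i : ℝ) : EReal) ≤ u i) ∧
      (∀ x : Fin n → ℝ,
        (∀ i, l i ≤ (((∑ j, a i j * qf (Q j) x) + 2 * (b i ⬝ᵥ x) + c i : ℝ) : EReal) ∧
            (((∑ j, a i j * qf (Q j) x) + 2 * (b i ⬝ᵥ x) + c i : ℝ) : EReal) ≤ u i) →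
        (∑ j, a0 j * qf (Q j) xs) + 2 * (b0 ⬝ᵥ xs) + c0 ≤
          (∑ j, a0 j * qf (Q j) x) + 2 * (b0 ⬝ᵥ x) + c0)) ↔
    -- `(xs, (xsᵀ Q_j xs)_j)` globally solves (CR')
    (((∀ i, l i ≤ (((∑ j ∈ K, a i j * qf (Q j) xs) + 2 * (b i ⬝ᵥ xs) + c i : ℝ) : EReal) ∧
          (((∑ j ∈ K, a i j * qf (Q j) xs) + 2 * (b i ⬝ᵥ xs) + c i : ℝ) : EReal) ≤ u i) ∧
        (∀ j ∈ K, qf (Q j) xs ≤ qf (Q j) xs)) ∧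
      (∀ (x : Fin n → ℝ) (t : Fin m → ℝ),
        ((∀ i, l i ≤ (((∑ j ∈ K, a i j * t j) + 2 * (b i ⬝ᵥ x) + c i : ℝ) : EReal) ∧
            (((∑ j ∈ K, a i j * t j) + 2 * (b i ⬝ᵥ x) + c i : ℝ) : EReal) ≤ u i) ∧
          (∀ j ∈ K, qf (Q j) x ≤ t j)) →
        (∑ j ∈ Kᶜ, a0 j * qf (Q j) xs) + (∑ j ∈ K, a0 j * qf (Q j) xs)
            + 2 * (b0 ⬝ᵥ xs) + c0 ≤
          (∑ j ∈ Kᶜ, a0 j * qf (Q j) x) + (∑ j ∈ K, a0 j * t j)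
            + 2 * (b0 ⬝ᵥ x) + c0)) := by
  have hK0 : ∀ j, j ∉ K → ∀ i, a i j = 0 := by
    intro j hj i
    by_contra h
    exact hj ((hK j).mpr (Or.inr ⟨i, h⟩))
  have hsum : ∀ (i : Fin p) (x : Fin n → ℝ),
      (∑ j ∈ K, a i j * qf (Q j) x) = ∑ j, a i j * qf (Q j) x := by
    intro i x
    exact Finset.sum_subset (Finset.subset_univ K)
      (fun j _ hj => by rw [hK0 j hj i, zero_mul])
  have hsum0 : ∀ x : Fin n → ℝ,
      (∑ j ∈ Kᶜ, a0 j * qf (Q j) x) + (∑ j ∈ K, a0 j * qf (Q j) x)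
        = ∑ j, a0 j * qf (Q j) x := fun x =>
    Finset.sum_compl_add_sum K (fun j => a0 j * qf (Q j) x)
  constructor
  · rintro ⟨hfeas, hopt⟩
    refine ⟨⟨fun i => ?_, fun j _ => le_refl _⟩, ?_⟩
    · rw [hsum i xs]
      exact hfeas i
    · rintro x t ⟨hfeasx, ht⟩
      obtain ⟨x', h1, h2, h3, h4⟩ := stmt8_construct hn Q hQ b0 b K hdim x t ht
      have hcon : ∀ i : Fin p,
          (∑ j, a i j * qf (Q j) x') + 2 * (b i ⬝ᵥ x') + c i
            = (∑ j ∈ K, a i j * t j) + 2 * (b i ⬝ᵥ x) + c i := by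
        intro i
        rw [← hsum i x', h3 i]
        have e : ∑ j ∈ K, a i j * qf (Q j) x' = ∑ j ∈ K, a i j * t j :=
          Finset.sum_congr rfl (fun j hj => by rw [h1 j hj])
        rw [e]
      have hx'feas := hopt x' (fun i => by rw [hcon i]; exact hfeasx i)
      have hobj : (∑ j, a0 j * qf (Q j) x') + 2 * (b0 ⬝ᵥ x') + c0
          ≤ (∑ j ∈ Kᶜ, a0 j * qf (Q j) x) + (∑ j ∈ K, a0 j * t j)
            + 2 * (b0 ⬝ᵥ x) + c0 := by
        have e1 : (∑ j ∈ Kᶜ, a0 j * qf (Q j) x') = ∑ j ∈ Kᶜ, a0 j * qf (Q j) x :=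
          Finset.sum_congr rfl (fun j hj => by rw [h2 j (Finset.mem_compl.mp hj)])
        have e2 : (∑ j ∈ K, a0 j * qf (Q j) x') = ∑ j ∈ K, a0 j * t j :=
          Finset.sum_congr rfl (fun j hj => by rw [h1 j hj])
        have := hsum0 x'
        nlinarith [h4]
      rw [hsum0 xs]
      linarith [hx'feas, hobj]
  · rintro ⟨⟨hfeas, _⟩, hopt⟩
    refine ⟨fun i => ?_, ?_⟩
    · rw [← hsum i xs]
      exact hfeas i
    · intro x hxfeas
      have hfx : (∀ i, l i ≤ (((∑ j ∈ K, a i j * qf (Q j) x) + 2 * (b i ⬝ᵥ x) + c i : ℝ) : EReal) ∧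
          (((∑ j ∈ K, a i j * qf (Q j) x) + 2 * (b i ⬝ᵥ x) + c i : ℝ) : EReal) ≤ u i) := by
        intro i
        rw [hsum i x]
        exact hxfeas i
      have := hopt x (fun j => qf (Q j) x) ⟨hfx, fun j _ => le_refl _⟩
      rw [hsum0 xs, hsum0 x] at this
      linarith
end
end

section
/- Let a₁, …, a_p ∈ ℝⁿ and r₁, …, r_p > 0, let Ω = { x ∈ ℝⁿ : ‖x − a_i‖ ≤ r_i, i = 1, …, p }, and suppose Ω has nonempty interior. Let v(CC) = inf_{z ∈ ℝⁿ} sup_{x ∈ Ω} ‖x − z‖². For z ∈ ℝⁿ, let v(SDP(z)) be the optimal value of: minimize t over t ∈ ℝ and λ ∈ ℝᵖ with λ_i ≥ 0, subject to the (n+1)×(n+1) matrix [[(−1 + Σᵢ λ_i) I_n, z − Σᵢ λ_i a_i],[(z − Σᵢ λ_i a_i)ᵀ, t + Σᵢ λ_i(‖a_i‖² − r_i²)]] ⪰ 0, and let v(DCC) = inf_{z ∈ ℝⁿ} ( v(SDP(z)) + ‖z‖² ). Let γ = inf_{x ∈ ℝⁿ} max_{i = 1, …, p} ‖x − a_i‖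 / r_i. Then there exists z̄ ∈ ℝⁿ such that v(DCC) ≥ sup_{x ∈ Ω} ‖x − z̄‖² ≥ v(CC) ≥ ((1 − γ)/(√2 + γ))² · v(DCC). -/
open Matrix

noncomputable section

/-- The `(n+1) × (n+1)` block matrix `[[M, v], [vᵀ, c]]`. -/
def blockMat {n : ℕ} (M : Matrix (Fin n) (Fin n) ℝ) (v : Fin n → ℝ) (c : ℝ) :
    Matrix (Fin n ⊕ Unit) (Fin n ⊕ Unit) ℝ :=
  Matrix.fromBlocks M (Matrix.of fun i _ => v i) (Matrix.of fun _ j => v j)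
    (Matrix.of fun _ _ => c)

/-- The intersection of the balls `‖x − a_i‖ ≤ r_i`. -/
def Omega15 (n p : ℕ) (a : Fin p → Fin n → ℝ) (r : Fin p → ℝ) : Set (Fin n → ℝ) :=
  {x | ∀ i, Real.sqrt ((x - a i) ⬝ᵥ (x - a i)) ≤ r i}

/-- Optimal value `v(SDP(z))` of the dual SDP of the inner maximization. -/
def vSDPz (n p : ℕ) (a : Fin p → Fin n → ℝ) (r : Fin p → ℝ) (z : Fin n → ℝ) : EReal :=
  sInf ((fun q : ℝ × (Fin p → ℝ) => (q.1 : EReal)) ''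
    {q | (∀ i, 0 ≤ q.2 i) ∧
      (blockMat ((-1 + ∑ i, q.2 i) • (1 : Matrix (Fin n) (Fin n) ℝ))
          (z - ∑ i, q.2 i • a i)
          (q.1 + ∑ i, q.2 i * (a i ⬝ᵥ a i - (r i) ^ 2))).PosSemidef})

/-- The value `v(DCC) = inf_z (v(SDP(z)) + ‖z‖²)`. -/
def vDCC (n p : ℕ) (a : Fin p → Fin n → ℝ) (r : Fin p → ℝ) : EReal :=
  sInf (Set.range fun z : Fin n → ℝ => vSDPz n p a r z + ((z ⬝ᵥ z : ℝ) : EReal))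

/-- The Chebyshev-center value `v(CC) = inf_z sup_{x ∈ Ω} ‖x − z‖²`. -/
def vCC (n p : ℕ) (a : Fin p → Fin n → ℝ) (r : Fin p → ℝ) : EReal :=
  sInf (Set.range fun z : Fin n → ℝ =>
    sSup ((fun x : Fin n → ℝ => (((x - z) ⬝ᵥ (x - z) : ℝ) : EReal)) '' Omega15 n p a r))

/-- `γ = inf_x max_i ‖x − a_i‖ / r_i`. -/
def gamma15 (n p : ℕ) (a : Fin p → Fin n → ℝ) (r : Fin p → ℝ) : ℝ :=
  sInf (Set.range fun x : Fin n → ℝ => ⨆ i, Real.sqrt ((x - a i) ⬝ᵥ (x - a i)) / r i)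


-- ======================= auxiliary lemmas =======================

theorem dotSelf_nonneg' {n : ℕ} (x : Fin n → ℝ) : 0 ≤ x ⬝ᵥ x :=
  Finset.sum_nonneg fun i _ => mul_self_nonneg (x i)

theorem blockMat_form' {n : ℕ} (M : Matrix (Fin n) (Fin n) ℝ) (v : Fin n → ℝ) (c : ℝ)
    (u : Fin n ⊕ Unit → ℝ) :
    u ⬝ᵥ (blockMat M v c) *ᵥ u
      = (fun i => u (Sum.inl i)) ⬝ᵥ M *ᵥ (fun i => u (Sum.inl i))
        + 2 * u (Sum.inr ()) * (v ⬝ᵥ fun i => u (Sum.inl i))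
        + c * u (Sum.inr ()) ^ 2 := by
  simp only [blockMat, dotProduct, mulVec, Fintype.sum_sum_type, Fintype.sum_unique,
    fromBlocks_apply₁₁, fromBlocks_apply₁₂, fromBlocks_apply₂₁, fromBlocks_apply₂₂, of_apply]
  have e1 : ∑ i, u (Sum.inl i) * (v i * u (Sum.inr ()))
      = u (Sum.inr ()) * ∑ j, v j * u (Sum.inl j) := by
    rw [Finset.mul_sum]; exact Finset.sum_congr rfl fun i _ => by ring
  have e2 : ∑ i, u (Sum.inl i) * (∑ j, M i j * u (Sum.inl j) + v i * u (Sum.inr ()))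
      = ∑ i, u (Sum.inl i) * (∑ j, M i j * u (Sum.inl j))
        + ∑ i, u (Sum.inl i) * (v i * u (Sum.inr ())) := by
    rw [← Finset.sum_add_distrib]
    exact Finset.sum_congr rfl fun i _ => by ring
  rw [e2, e1]
  ring

theorem blockMat_quad' {n : ℕ} {M : Matrix (Fin n) (Fin n) ℝ} {v : Fin n → ℝ} {c : ℝ}
    (h : (blockMat M v c).PosSemidef) (x : Fin n → ℝ) (y : ℝ) :
    0 ≤ x ⬝ᵥ M *ᵥ x + 2 * y * (v ⬝ᵥ x) + c * y ^ 2 := by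
  have h2 := h.dotProduct_mulVec_nonneg (Sum.elim x fun _ => y)
  rw [star_trivial, blockMat_form'] at h2
  simpa using h2

theorem ERealSSup_coe' (A : Set ℝ) (hne : A.Nonempty) (hbdd : BddAbove A) :
    sSup ((fun x : ℝ => (x : EReal)) '' A) = ((sSup A : ℝ) : EReal) := by
  apply le_antisymm
  · apply sSup_le
    rintro e ⟨a, ha, rfl⟩
    exact EReal.coe_le_coe_iff.2 (le_csSup hbdd ha)
  · obtain ⟨a, ha⟩ := hne
    set m := sSup ((fun x : ℝ => (x : EReal)) '' A) with hm
    have hmem : ∀ x ∈ A, (x : EReal) ≤ m := fun x hx => le_sSup ⟨x, hx, rfl⟩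
    rcases eq_top_or_lt_top m with h | h
    · rw [h]; exact le_top
    · have hbot : (⊥ : EReal) < m := lt_of_lt_of_le (EReal.bot_lt_coe a) (hmem a ha)
      lift m to ℝ using ⟨h.ne, hbot.ne'⟩ with m'
      exact EReal.coe_le_coe_iff.2 (csSup_le ⟨a, ha⟩ fun x hx => EReal.coe_le_coe_iff.1 (hmem x hx))

theorem psdCert' {n : ℕ} (k : ℝ) (hk : 0 ≤ k) (a : Fin n → ℝ) :
    (blockMat (k • (1 : Matrix (Fin n) (Fin n) ℝ)) ((-k) • a) (k * (a ⬝ᵥ a))).PosSemidef := by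
  rw [posSemidef_iff_dotProduct_mulVec]; constructor
  · refine Matrix.IsHermitian.fromBlocks ?_ ?_ ?_
    · show _ᴴ = _
      rw [conjTranspose_smul, conjTranspose_one]
      norm_num
    · ext i j; simp [conjTranspose_apply]
    · ext i j; simp [conjTranspose_apply]
  · intro u
    rw [star_trivial, blockMat_form']
    set x : Fin n → ℝ := fun i => u (Sum.inl i)
    set y := u (Sum.inr ())
    have key : x ⬝ᵥ (k • (1 : Matrix (Fin n) (Fin n) ℝ)) *ᵥ x
        + 2 * y * (((-k) • a) ⬝ᵥ x) + (k * (a ⬝ᵥ a)) * y ^ 2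
        = k * ((x - y • a) ⬝ᵥ (x - y • a)) := by
      simp only [smul_mulVec, one_mulVec, smul_dotProduct, dotProduct_smul,
        sub_dotProduct, dotProduct_sub, smul_eq_mul]
      rw [dotProduct_comm a x]
      ring
    rw [key]
    exact mul_nonneg hk (dotSelf_nonneg' _)

def iotaE' {n : ℕ} : (Fin n → ℝ) → EuclideanSpace ℝ (Fin n) :=
  (WithLp.equiv 2 (Fin n → ℝ)).symm

lemma nrm_eq' {n : ℕ} (x : Fin n → ℝ) : Real.sqrt (x ⬝ᵥ x) = ‖iotaE' x‖ := by
  rw [EuclideanSpace.norm_eq]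
  congr 1
  simp [dotProduct, iotaE', Real.norm_eq_abs, sq_abs, pow_two]

lemma iotaE_sub' {n : ℕ} (x y : Fin n → ℝ) : iotaE' (x - y) = iotaE' x - iotaE' y := rfl

lemma iotaE_inj' {n : ℕ} {x y : Fin n → ℝ} (h : iotaE' x = iotaE' y) : x = y :=
  (WithLp.equiv 2 (Fin n → ℝ)).symm.injective h

def DEfun' (n p : ℕ) (a : Fin p → Fin n → ℝ) (r : Fin p → ℝ) :
    EuclideanSpace ℝ (Fin n) → ℝ :=
  fun z => sSup ((fun x => ‖iotaE' x - z‖) '' Omega15 n p a r)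

section DEsec
variable {n p : ℕ} {a : Fin p → Fin n → ℝ} {r : Fin p → ℝ} {x₀ : Fin n → ℝ}
  (hx₀ : x₀ ∈ Omega15 n p a r) (i₀ : Fin p)

include hx₀ i₀

omit hx₀ in
lemma DE_bdd' (z : EuclideanSpace ℝ (Fin n)) :
    BddAbove ((fun x => ‖iotaE' x - z‖) '' Omega15 n p a r) := by
  refine ⟨r i₀ + ‖iotaE' (a i₀) - z‖, ?_⟩
  rintro b ⟨x, hx, rfl⟩
  have h1 : ‖iotaE' x - iotaE' (a i₀)‖ ≤ r i₀ := by
    rw [← iotaE_sub', ← nrm_eq']; exact hx i₀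
  calc ‖iotaE' x - z‖ ≤ ‖iotaE' x - iotaE' (a i₀)‖ + ‖iotaE' (a i₀) - z‖ := by
        have := norm_add_le (iotaE' x - iotaE' (a i₀)) (iotaE' (a i₀) - z)
        simpa [sub_add_sub_cancel] using this
    _ ≤ r i₀ + ‖iotaE' (a i₀) - z‖ := by linarith

lemma DE_mem_le' {x : Fin n → ℝ} (hx : x ∈ Omega15 n p a r) (z : EuclideanSpace ℝ (Fin n)) :
    ‖iotaE' x - z‖ ≤ DEfun' n p a r z :=
  le_csSup (DE_bdd' i₀ z) ⟨x, hx, rfl⟩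

lemma DE_nonneg' (z : EuclideanSpace ℝ (Fin n)) : 0 ≤ DEfun' n p a r z :=
  le_trans (norm_nonneg _) (DE_mem_le' hx₀ i₀ hx₀ z)

lemma DE_lip' (z w : EuclideanSpace ℝ (Fin n)) :
    DEfun' n p a r z ≤ DEfun' n p a r w + dist z w := by
  refine csSup_le ⟨_, x₀, hx₀, rfl⟩ ?_
  rintro b ⟨x, hx, rfl⟩
  have h1 : ‖iotaE' x - z‖ ≤ ‖iotaE' x - w‖ + ‖w - z‖ := by
    have := norm_add_le (iotaE' x - w) (w - z)
    simpa [sub_add_sub_cancel] using this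
  have h3 := DE_mem_le' hx₀ i₀ hx w
  rw [dist_comm, dist_eq_norm]
  linarith

lemma DE_cont' : Continuous (DEfun' n p a r) := by
  have : LipschitzWith 1 (DEfun' n p a r) := by
    apply LipschitzWith.of_dist_le_mul
    intro z w
    simp only [NNReal.coe_one, ENNReal.coe_one, one_mul, Real.dist_eq, abs_sub_le_iff]
    constructor
    · have := DE_lip' hx₀ i₀ z w; linarith
    · have := DE_lip' hx₀ i₀ w z; rw [dist_comm] at this; linarith
  exact this.continuous

lemma DE_coercive' (z : EuclideanSpace ℝ (Fin n)) :
    ‖z‖ - ‖iotaE' x₀‖ ≤ DEfun' n p a r z := by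
  have h1 : ‖z‖ ≤ ‖iotaE' x₀ - z‖ + ‖iotaE' x₀‖ := by
    have := norm_add_le (z - iotaE' x₀) (iotaE' x₀)
    simp only [sub_add_cancel] at this
    rw [norm_sub_rev] at this
    linarith
  have := DE_mem_le' hx₀ i₀ hx₀ z
  linarith

lemma DE_min' : ∃ zE : EuclideanSpace ℝ (Fin n), ∀ w, DEfun' n p a r zE ≤ DEfun' n p a r w := by
  set R := DEfun' n p a r 0 + ‖iotaE' x₀‖ with hR
  have hR0 : 0 ≤ R := add_nonneg (DE_nonneg' hx₀ i₀ 0) (norm_nonneg _)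
  obtain ⟨zE, hzK, hzmin'⟩ := (isCompact_closedBall (0 : EuclideanSpace ℝ (Fin n)) R).exists_isMinOn
    ⟨0, Metric.mem_closedBall_self hR0⟩ (DE_cont' hx₀ i₀).continuousOn
  have hzmin : ∀ w ∈ Metric.closedBall (0 : EuclideanSpace ℝ (Fin n)) R,
      DEfun' n p a r zE ≤ DEfun' n p a r w := fun w hw => hzmin' hw
  refine ⟨zE, fun w => ?_⟩
  by_cases hw : w ∈ Metric.closedBall (0 : EuclideanSpace ℝ (Fin n)) R
  · exact hzmin w hw
  · have h1 : R < ‖w‖ := by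
      simp only [Metric.mem_closedBall, dist_zero_right, not_le] at hw
      exact hw
    have h2 := DE_coercive' hx₀ i₀ w
    have h3 := hzmin 0 (Metric.mem_closedBall_self hR0)
    linarith

lemma SetE_coe' (z : Fin n → ℝ) :
    sSup ((fun x : Fin n → ℝ => (((x - z) ⬝ᵥ (x - z) : ℝ) : EReal)) '' Omega15 n p a r)
      = ((sSup ((fun x : Fin n → ℝ => (x - z) ⬝ᵥ (x - z)) '' Omega15 n p a r) : ℝ) : EReal) := by
  have hdn : ∀ v : Fin n → ℝ, v ⬝ᵥ v = ‖iotaE' v‖ ^ 2 := fun v => by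
    rw [← nrm_eq' v, Real.sq_sqrt (dotSelf_nonneg' v)]
  have himg : (fun x : Fin n → ℝ => (((x - z) ⬝ᵥ (x - z) : ℝ) : EReal)) '' Omega15 n p a r
      = (fun t : ℝ => (t : EReal)) ''
          ((fun x : Fin n → ℝ => (x - z) ⬝ᵥ (x - z)) '' Omega15 n p a r) := by
    rw [Set.image_image]
  have hFne : ((fun x : Fin n → ℝ => (x - z) ⬝ᵥ (x - z)) '' Omega15 n p a r).Nonempty :=
    ⟨_, x₀, hx₀, rfl⟩
  have hFbdd : BddAbove ((fun x : Fin n → ℝ => (x - z) ⬝ᵥ (x - z)) '' Omega15 n p a r) := by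
    refine ⟨(DEfun' n p a r (iotaE' z)) ^ 2, ?_⟩
    rintro b ⟨x, hx, rfl⟩
    show (x - z) ⬝ᵥ (x - z) ≤ _
    rw [hdn, iotaE_sub']
    exact pow_le_pow_left₀ (norm_nonneg _) (DE_mem_le' hx₀ i₀ hx _) 2
  rw [himg, ERealSSup_coe' _ hFne hFbdd]

lemma FA_bdd' (z : Fin n → ℝ) :
    BddAbove ((fun x : Fin n → ℝ => (x - z) ⬝ᵥ (x - z)) '' Omega15 n p a r) := by
  have hdn : ∀ v : Fin n → ℝ, v ⬝ᵥ v = ‖iotaE' v‖ ^ 2 := fun v => by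
    rw [← nrm_eq' v, Real.sq_sqrt (dotSelf_nonneg' v)]
  refine ⟨(DEfun' n p a r (iotaE' z)) ^ 2, ?_⟩
  rintro b ⟨x, hx, rfl⟩
  show (x - z) ⬝ᵥ (x - z) ≤ _
  rw [hdn, iotaE_sub']
  exact pow_le_pow_left₀ (norm_nonneg _) (DE_mem_le' hx₀ i₀ hx _) 2

lemma FA_eq_DE' (z : Fin n → ℝ) :
    sSup ((fun x : Fin n → ℝ => (x - z) ⬝ᵥ (x - z)) '' Omega15 n p a r)
      = (DEfun' n p a r (iotaE' z)) ^ 2 := by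
  have hdn : ∀ v : Fin n → ℝ, v ⬝ᵥ v = ‖iotaE' v‖ ^ 2 := fun v => by
    rw [← nrm_eq' v, Real.sq_sqrt (dotSelf_nonneg' v)]
  have hFne : ((fun x : Fin n → ℝ => (x - z) ⬝ᵥ (x - z)) '' Omega15 n p a r).Nonempty :=
    ⟨_, x₀, hx₀, rfl⟩
  have hFbdd := FA_bdd' hx₀ i₀ z
  apply le_antisymm
  · refine csSup_le hFne ?_
    rintro b ⟨x, hx, rfl⟩
    show (x - z) ⬝ᵥ (x - z) ≤ _
    rw [hdn, iotaE_sub']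
    exact pow_le_pow_left₀ (norm_nonneg _) (DE_mem_le' hx₀ i₀ hx _) 2
  · have hD : DEfun' n p a r (iotaE' z)
        ≤ Real.sqrt (sSup ((fun x : Fin n → ℝ => (x - z) ⬝ᵥ (x - z)) '' Omega15 n p a r)) := by
      refine csSup_le ⟨_, x₀, hx₀, rfl⟩ ?_
      rintro b ⟨x, hx, rfl⟩
      have h1 : (x - z) ⬝ᵥ (x - z)
          ≤ sSup ((fun x : Fin n → ℝ => (x - z) ⬝ᵥ (x - z)) '' Omega15 n p a r) :=
        le_csSup hFbdd ⟨x, hx, rfl⟩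
      have h2 : ‖iotaE' x - iotaE' z‖ = Real.sqrt ((x - z) ⬝ᵥ (x - z)) := by
        rw [nrm_eq', iotaE_sub']
      show ‖iotaE' x - iotaE' z‖ ≤ _
      rw [h2]
      exact Real.sqrt_le_sqrt h1
    have hsup0 : 0 ≤ sSup ((fun x : Fin n → ℝ => (x - z) ⬝ᵥ (x - z)) '' Omega15 n p a r) :=
      le_trans (dotSelf_nonneg' (x₀ - z)) (le_csSup hFbdd ⟨x₀, hx₀, rfl⟩)
    calc (DEfun' n p a r (iotaE' z)) ^ 2
        ≤ (Real.sqrt (sSup ((fun x : Fin n → ℝ => (x - z) ⬝ᵥ (x - z)) '' Omega15 n p a r))) ^ 2 :=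
          pow_le_pow_left₀ (DE_nonneg' hx₀ i₀ _) hD 2
      _ = _ := Real.sq_sqrt hsup0

end DEsec

lemma sum_dot' {p n : ℕ} (c : Fin p → ℝ) (a : Fin p → Fin n → ℝ) (x : Fin n → ℝ) :
    (∑ i, c i • a i) ⬝ᵥ x = ∑ i, c i * (a i ⬝ᵥ x) := by
  simp only [dotProduct, Finset.sum_apply, Pi.smul_apply, smul_eq_mul, Finset.sum_mul,
    Finset.mul_sum]
  rw [Finset.sum_comm]
  exact Finset.sum_congr rfl fun i _ => Finset.sum_congr rfl fun j _ => by ring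

lemma feas_bound' {n p : ℕ} {a : Fin p → Fin n → ℝ} {r : Fin p → ℝ}
    {z : Fin n → ℝ} {t : ℝ} {lam : Fin p → ℝ} (hlam : ∀ i, 0 ≤ lam i)
    (hpsd : (blockMat ((-1 + ∑ i, lam i) • (1 : Matrix (Fin n) (Fin n) ℝ))
          (z - ∑ i, lam i • a i)
          (t + ∑ i, lam i * (a i ⬝ᵥ a i - (r i) ^ 2))).PosSemidef)
    {x : Fin n → ℝ} (hx : x ∈ Omega15 n p a r) :
    (x - z) ⬝ᵥ (x - z) ≤ t + z ⬝ᵥ z := by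
  have hq := blockMat_quad' hpsd x 1
  simp only [smul_mulVec, one_mulVec, dotProduct_smul, smul_eq_mul, sub_dotProduct,
    mul_one, one_pow] at hq
  rw [sum_dot'] at hq
  have e : (-1 + ∑ i, lam i) * (x ⬝ᵥ x) = (∑ i, lam i) * (x ⬝ᵥ x) - x ⬝ᵥ x := by ring
  rw [e] at hq
  have hsum : ∑ i, lam i * ((x - a i) ⬝ᵥ (x - a i) - r i ^ 2) ≤ 0 := by
    refine Finset.sum_nonpos fun i _ => ?_
    have hd2 : (x - a i) ⬝ᵥ (x - a i) ≤ r i ^ 2 := by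
      have h1 := hx i
      nlinarith [Real.sq_sqrt (dotSelf_nonneg' (x - a i)),
        Real.sqrt_nonneg ((x - a i) ⬝ᵥ (x - a i))]
    have := mul_le_mul_of_nonneg_left (sub_nonpos.2 hd2) (hlam i)
    simpa using this
  have hexp : ∑ i, lam i * ((x - a i) ⬝ᵥ (x - a i) - r i ^ 2)
      = (∑ i, lam i) * (x ⬝ᵥ x) - 2 * (∑ i, lam i * (a i ⬝ᵥ x))
        + (∑ i, lam i * (a i ⬝ᵥ a i - r i ^ 2)) := by
    rw [Finset.sum_mul, Finset.mul_sum, ← Finset.sum_sub_distrib, ← Finset.sum_add_distrib]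
    refine Finset.sum_congr rfl fun i _ => ?_
    rw [sub_dotProduct, dotProduct_sub, dotProduct_sub, dotProduct_comm (a i) x]
    ring
  rw [hexp] at hsum
  have hzz : (x - z) ⬝ᵥ (x - z) = x ⬝ᵥ x - 2 * (z ⬝ᵥ x) + z ⬝ᵥ z := by
    rw [sub_dotProduct, dotProduct_sub, dotProduct_sub, dotProduct_comm z x]
    ring
  rw [hzz]
  linarith

lemma key_le' {n p : ℕ} {a : Fin p → Fin n → ℝ} {r : Fin p → ℝ} {x₀ : Fin n → ℝ}
    (hx₀ : x₀ ∈ Omega15 n p a r) (i₀ : Fin p) (z : Fin n → ℝ) :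
    sSup ((fun x : Fin n → ℝ => (((x - z) ⬝ᵥ (x - z) : ℝ) : EReal)) '' Omega15 n p a r)
      ≤ vSDPz n p a r z + ((z ⬝ᵥ z : ℝ) : EReal) := by
  set Sv : ℝ := sSup ((fun x : Fin n → ℝ => (x - z) ⬝ᵥ (x - z)) '' Omega15 n p a r) with hSv
  have hFne : ((fun x : Fin n → ℝ => (x - z) ⬝ᵥ (x - z)) '' Omega15 n p a r).Nonempty :=
    ⟨_, x₀, hx₀, rfl⟩
  have h1 : (((Sv - z ⬝ᵥ z : ℝ)) : EReal) ≤ vSDPz n p a r z := by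
    refine le_sInf ?_
    rintro e ⟨⟨t, lam⟩, ⟨hlam, hpsd⟩, rfl⟩
    refine EReal.coe_le_coe_iff.2 ?_
    have hSle : Sv ≤ t + z ⬝ᵥ z := by
      refine csSup_le hFne ?_
      rintro b ⟨x, hx, rfl⟩
      exact feas_bound' hlam hpsd hx
    simp only
    linarith
  rw [SetE_coe' hx₀ i₀ z, ← hSv]
  calc ((Sv : ℝ) : EReal) = ((Sv - z ⬝ᵥ z : ℝ) : EReal) + ((z ⬝ᵥ z : ℝ) : EReal) := by
        rw [← EReal.coe_add]; norm_num
    _ ≤ _ := add_le_add_left h1 _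

lemma cert_mem' {n p : ℕ} (a : Fin p → Fin n → ℝ) (r : Fin p → ℝ) (i₀ : Fin p)
    {s : ℝ} (hs : 1 ≤ s) :
    (∀ i, 0 ≤ (Pi.single i₀ s : Fin p → ℝ) i) ∧
      (blockMat ((-1 + ∑ i, (Pi.single i₀ s : Fin p → ℝ) i) • (1 : Matrix (Fin n) (Fin n) ℝ))
          (a i₀ - ∑ i, (Pi.single i₀ s : Fin p → ℝ) i • a i)
          ((s * r i₀ ^ 2 - a i₀ ⬝ᵥ a i₀)
            + ∑ i, (Pi.single i₀ s : Fin p → ℝ) i * (a i ⬝ᵥ a i - (r i) ^ 2))).PosSemidef := by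
  have hs0 : (0:ℝ) ≤ s := by linarith
  have h1 : ∑ i, (Pi.single i₀ s : Fin p → ℝ) i = s := by
    simp [Finset.sum_pi_single']
  have h2 : ∑ i, (Pi.single i₀ s : Fin p → ℝ) i • a i = s • a i₀ := by
    rw [Finset.sum_eq_single i₀]
    · simp
    · intro b _ hb; simp [Pi.single_apply, hb]
    · intro h; exact absurd (Finset.mem_univ _) h
  have h3 : ∑ i, (Pi.single i₀ s : Fin p → ℝ) i * (a i ⬝ᵥ a i - (r i) ^ 2)
      = s * (a i₀ ⬝ᵥ a i₀ - r i₀ ^ 2) := by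
    rw [Finset.sum_eq_single i₀]
    · simp
    · intro b _ hb; simp [Pi.single_apply, hb]
    · intro h; exact absurd (Finset.mem_univ _) h
  constructor
  · intro i
    rcases eq_or_ne i i₀ with h | h <;> simp [Pi.single_apply, h, hs0]
  · rw [h1, h2, h3]
    have e1 : (-1 + s) • (1 : Matrix (Fin n) (Fin n) ℝ) = (s - 1) • 1 := by
      congr 1; ring
    have e2 : a i₀ - s • a i₀ = (-(s - 1)) • a i₀ := by
      funext j
      simp only [Pi.sub_apply, Pi.smul_apply, smul_eq_mul]
      ring
    have e3 : (s * r i₀ ^ 2 - a i₀ ⬝ᵥ a i₀) + s * (a i₀ ⬝ᵥ a i₀ - r i₀ ^ 2)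
        = (s - 1) * (a i₀ ⬝ᵥ a i₀) := by ring
    rw [e1, e2, e3]
    exact psdCert' (s - 1) (by linarith) (a i₀)

lemma vDCC_le_r' {n p : ℕ} (a : Fin p → Fin n → ℝ) {r : Fin p → ℝ} (hr : ∀ i, 0 < r i)
    (i₀ : Fin p) : vDCC n p a r ≤ ((r i₀ ^ 2 : ℝ) : EReal) := by
  have hr2 : 0 < r i₀ ^ 2 := pow_pos (hr i₀) 2
  have hstep : ∀ ε : ℝ, 0 < ε → vDCC n p a r ≤ ((r i₀ ^ 2 + ε : ℝ) : EReal) := by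
    intro ε hε
    set s := 1 + ε / r i₀ ^ 2 with hs
    have hs1 : 1 ≤ s := by
      have := (div_pos hε hr2).le
      rw [hs]; linarith
    obtain ⟨hlam, hpsd⟩ := cert_mem' a r i₀ hs1
    have h1 : vSDPz n p a r (a i₀) ≤ ((s * r i₀ ^ 2 - a i₀ ⬝ᵥ a i₀ : ℝ) : EReal) :=
      sInf_le ⟨((s * r i₀ ^ 2 - a i₀ ⬝ᵥ a i₀ : ℝ), (Pi.single i₀ s : Fin p → ℝ)),
        ⟨hlam, hpsd⟩, rfl⟩
    have h2 : vDCC n p a r ≤ vSDPz n p a r (a i₀) + ((a i₀ ⬝ᵥ a i₀ : ℝ) : EReal) :=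
      sInf_le ⟨a i₀, rfl⟩
    have h3 : vSDPz n p a r (a i₀) + ((a i₀ ⬝ᵥ a i₀ : ℝ) : EReal)
        ≤ ((s * r i₀ ^ 2 - a i₀ ⬝ᵥ a i₀ : ℝ) : EReal) + ((a i₀ ⬝ᵥ a i₀ : ℝ) : EReal) :=
      add_le_add_left h1 _
    have h4 : ((s * r i₀ ^ 2 - a i₀ ⬝ᵥ a i₀ : ℝ) : EReal) + ((a i₀ ⬝ᵥ a i₀ : ℝ) : EReal)
        = ((r i₀ ^ 2 + ε : ℝ) : EReal) := by
      rw [← EReal.coe_add]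
      congr 1
      rw [hs]
      field_simp
      rw [mul_add, mul_one, mul_div_assoc', mul_div_cancel_left₀ ε hr2.ne']; ring
    exact le_trans h2 (le_trans h3 (le_of_eq h4))
  by_contra hcon
  push_neg at hcon
  obtain ⟨m, hm1, hm2⟩ := exists_between hcon
  have hmtop : m ≠ ⊤ := (lt_of_lt_of_le hm2 (hstep 1 one_pos)).trans_le le_top |>.ne
  have hmbot : m ≠ ⊥ := (lt_of_le_of_lt (bot_le) hm1).ne'
  lift m to ℝ using ⟨hmtop, hmbot⟩
  have h5 : r i₀ ^ 2 < m := EReal.coe_lt_coe_iff.1 hm1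
  have h6 := hstep (m - r i₀ ^ 2) (by linarith)
  rw [show r i₀ ^ 2 + (m - r i₀ ^ 2) = m by ring] at h6
  exact absurd (lt_of_le_of_lt h6 hm2) (lt_irrefl _)

lemma gamma_nonneg' {n p : ℕ} (hp : 0 < p) (a : Fin p → Fin n → ℝ) {r : Fin p → ℝ}
    (hr : ∀ i, 0 < r i) (x₀ : Fin n → ℝ) : 0 ≤ gamma15 n p a r := by
  haveI : Nonempty (Fin p) := ⟨⟨0, hp⟩⟩
  refine le_csInf ⟨_, ⟨x₀, rfl⟩⟩ ?_
  rintro b ⟨x, rfl⟩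
  exact Real.iSup_nonneg fun i => div_nonneg (Real.sqrt_nonneg _) (hr i).le

lemma gamma_le_one' {n p : ℕ} (hp : 0 < p) {a : Fin p → Fin n → ℝ} {r : Fin p → ℝ}
    (hr : ∀ i, 0 < r i) {x₀ : Fin n → ℝ}
    (hx₀ : ∀ i, Real.sqrt ((x₀ - a i) ⬝ᵥ (x₀ - a i)) < r i) : gamma15 n p a r ≤ 1 := by
  haveI : Nonempty (Fin p) := ⟨⟨0, hp⟩⟩
  have h1 : (⨆ i, Real.sqrt ((x₀ - a i) ⬝ᵥ (x₀ - a i)) / r i) ≤ 1 :=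
    ciSup_le fun i => (div_le_one (hr i)).2 (hx₀ i).le
  refine le_trans (csInf_le ?_ ⟨x₀, rfl⟩) h1
  refine ⟨0, ?_⟩
  rintro b ⟨x, rfl⟩
  exact Real.iSup_nonneg fun i => div_nonneg (Real.sqrt_nonneg _) (hr i).le

lemma D_low' {n p : ℕ} (hp : 0 < p) (hn : 0 < n) {a : Fin p → Fin n → ℝ} {r : Fin p → ℝ}
    (hr : ∀ i, 0 < r i) (i₀ : Fin p) (hi₀ : ∀ i, r i₀ ≤ r i)
    {x₀ : Fin n → ℝ} (hx₀ : x₀ ∈ Omega15 n p a r) (z : EuclideanSpace ℝ (Fin n)) :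
    (1 - gamma15 n p a r) * r i₀ ≤ DEfun' n p a r z := by
  haveI : Nonempty (Fin p) := ⟨⟨0, hp⟩⟩
  set γ := gamma15 n p a r with hγ
  set g : (Fin n → ℝ) → ℝ := fun x => ⨆ i, Real.sqrt ((x - a i) ⬝ᵥ (x - a i)) / r i with hg
  have hγdef : γ = sInf (Set.range g) := rfl
  have hD0 := DE_nonneg' hx₀ i₀ z
  by_contra hcon
  push_neg at hcon
  set ε := ((1 - γ) * r i₀ - DEfun' n p a r z) / 2 with hεdef
  have hεpos : 0 < ε := by rw [hεdef]; linarith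
  set ε' := ε / r i₀ with hε'def
  have hε'pos : 0 < ε' := div_pos hεpos (hr i₀)
  have hε'r : ε' * r i₀ = ε := div_mul_cancel₀ _ (hr i₀).ne'
  have hlt : sInf (Set.range g) < γ + ε' := by rw [← hγdef]; linarith
  obtain ⟨b, ⟨xh, rfl⟩, hb⟩ :=
    exists_lt_of_csInf_lt (⟨g x₀, ⟨x₀, rfl⟩⟩ : (Set.range g).Nonempty) hlt
  set δ := γ + ε' with hδdef
  have hxa : ∀ i, ‖iotaE' xh - iotaE' (a i)‖ ≤ δ * r i := by
    intro i
    have h1 : Real.sqrt ((xh - a i) ⬝ᵥ (xh - a i)) / r i ≤ g xh :=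
      le_ciSup (f := fun j => Real.sqrt ((xh - a j) ⬝ᵥ (xh - a j)) / r j)
        (Set.Finite.bddAbove (Set.finite_range _)) i
    have h2 : Real.sqrt ((xh - a i) ⬝ᵥ (xh - a i)) ≤ δ * r i :=
      (div_le_iff₀ (hr i)).1 (le_of_lt (lt_of_le_of_lt h1 hb))
    rw [← iotaE_sub', ← nrm_eq']
    exact h2
  by_cases hδ1 : 1 ≤ δ
  · have hρ : (1 - δ) * r i₀ ≤ 0 := by
      have := mul_le_mul_of_nonneg_right (sub_nonpos.2 hδ1) (hr i₀).le
      simpa using this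
    have hexp : (1 - γ) * r i₀ = (1 - δ) * r i₀ + ε' * r i₀ := by rw [hδdef]; ring
    rw [hε'r] at hexp
    linarith [hεdef]
  · push_neg at hδ1
    set ρ := (1 - δ) * r i₀ with hρdef
    have hρ0 : 0 ≤ ρ := mul_nonneg (by linarith) (hr i₀).le
    set zf := WithLp.equiv 2 (Fin n → ℝ) z with hzf
    have hzfι : iotaE' zf = z := (WithLp.equiv 2 (Fin n → ℝ)).symm_apply_apply z
    set w := xh - zf with hw
    obtain ⟨u, hu1, hu2⟩ : ∃ u : Fin n → ℝ, u ⬝ᵥ u = 1 ∧ 0 ≤ u ⬝ᵥ w := by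
      by_cases hw0 : w = 0
      · refine ⟨Pi.single ⟨0, hn⟩ 1, ?_, ?_⟩
        · simp [dotProduct, Pi.single_apply]
        · rw [hw0, dotProduct_zero]
      · have hnpos : 0 < ‖iotaE' w‖ := by
          refine norm_pos_iff.2 fun h => hw0 (iotaE_inj' ?_)
          rw [h]; rfl
        have hdpos : 0 < w ⬝ᵥ w := by
          rw [← nrm_eq'] at hnpos
          exact Real.sqrt_pos.1 hnpos
        have hspos : 0 < Real.sqrt (w ⬝ᵥ w) := Real.sqrt_pos.2 hdpos
        refine ⟨(1 / Real.sqrt (w ⬝ᵥ w)) • w, ?_, ?_⟩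
        · rw [smul_dotProduct, dotProduct_smul, smul_eq_mul, smul_eq_mul]
          field_simp
          exact (Real.sq_sqrt hdpos.le).symm
        · rw [smul_dotProduct, smul_eq_mul]
          exact mul_nonneg (by positivity) (dotSelf_nonneg' w)
    set y := xh + ρ • u with hy
    have hyx : y - xh = ρ • u := by rw [hy]; abel
    have hρu : ‖iotaE' (ρ • u)‖ = ρ := by
      rw [← nrm_eq']
      have hdd : (ρ • u) ⬝ᵥ (ρ • u) = ρ ^ 2 := by
        rw [smul_dotProduct, dotProduct_smul, smul_eq_mul, smul_eq_mul, hu1]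
        ring
      rw [hdd]
      exact Real.sqrt_sq hρ0
    have hyΩ : y ∈ Omega15 n p a r := by
      intro i
      rw [nrm_eq', iotaE_sub']
      have htri : ‖iotaE' y - iotaE' (a i)‖
          ≤ ‖iotaE' y - iotaE' xh‖ + ‖iotaE' xh - iotaE' (a i)‖ := by
        have := norm_add_le (iotaE' y - iotaE' xh) (iotaE' xh - iotaE' (a i))
        simpa [sub_add_sub_cancel] using this
      have h4 : ‖iotaE' y - iotaE' xh‖ = ρ := by rw [← iotaE_sub', hyx, hρu]
      have h5 : ρ ≤ (1 - δ) * r i := by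
        rw [hρdef]
        exact mul_le_mul_of_nonneg_left (hi₀ i) (by linarith)
      have h6 := hxa i
      have h7 : (1 - δ) * r i + δ * r i = r i := by ring
      linarith
    have hyd : ρ ≤ ‖iotaE' y - z‖ := by
      have hyzf : y - zf = w + ρ • u := by rw [hy, hw]; abel
      have hdot : (y - zf) ⬝ᵥ (y - zf) = w ⬝ᵥ w + 2 * ρ * (u ⬝ᵥ w) + ρ ^ 2 := by
        rw [hyzf]
        simp only [add_dotProduct, dotProduct_add, smul_dotProduct, dotProduct_smul, smul_eq_mul]
        rw [dotProduct_comm w u, hu1]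
        ring
      have h6 : ρ ^ 2 ≤ (y - zf) ⬝ᵥ (y - zf) := by
        rw [hdot]
        nlinarith [dotSelf_nonneg' w, hu2, hρ0]
      have h7 : ρ = Real.sqrt (ρ ^ 2) := (Real.sqrt_sq hρ0).symm
      rw [h7, ← hzfι, ← iotaE_sub', ← nrm_eq']
      exact Real.sqrt_le_sqrt h6
    have hDge := le_trans hyd (DE_mem_le' hx₀ i₀ hyΩ z)
    have hexp : (1 - γ) * r i₀ = ρ + ε' * r i₀ := by rw [hρdef, hδdef]; ring
    rw [hε'r] at hexp
    linarith [hεdef]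

/-- approximation bound for Beck's convex relaxation of the Chebyshev
center problem: there is `z̄` with
`v(DCC) ≥ sup_{x∈Ω} ‖x − z̄‖² ≥ v(CC) ≥ ((1−γ)/(√2+γ))² · v(DCC)`. -/
theorem stmt15 (n p : ℕ) (hp : 0 < p)
    (a : Fin p → Fin n → ℝ) (r : Fin p → ℝ) (hr : ∀ i, 0 < r i)
    (hint : ∃ x : Fin n → ℝ, ∀ i, Real.sqrt ((x - a i) ⬝ᵥ (x - a i)) < r i) :
    ∃ zbar : Fin n → ℝ,
      sSup ((fun x : Fin n → ℝ => (((x - zbar) ⬝ᵥ (x - zbar) : ℝ) : EReal)) ''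
          Omega15 n p a r) ≤ vDCC n p a r ∧
      vCC n p a r ≤
        sSup ((fun x : Fin n → ℝ => (((x - zbar) ⬝ᵥ (x - zbar) : ℝ) : EReal)) ''
          Omega15 n p a r) ∧
      ((((1 - gamma15 n p a r) / (Real.sqrt 2 + gamma15 n p a r)) ^ 2 : ℝ) : EReal)
          * vDCC n p a r ≤ vCC n p a r := by
  classical
  obtain ⟨x₀, hx₀s⟩ := hint
  have hx₀ : x₀ ∈ Omega15 n p a r := fun i => (hx₀s i).le
  obtain ⟨i₀, -, hi₀'⟩ :=
    Finset.exists_min_image Finset.univ r ⟨⟨0, hp⟩, Finset.mem_univ _⟩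
  have hi₀ : ∀ i, r i₀ ≤ r i := fun i => hi₀' i (Finset.mem_univ i)
  -- minimizer of the sup-distance function
  obtain ⟨zE, hzE⟩ := DE_min' hx₀ i₀
  set zbar := WithLp.equiv 2 (Fin n → ℝ) zE with hzbar
  have hzbarι : iotaE' zbar = zE := (WithLp.equiv 2 (Fin n → ℝ)).symm_apply_apply zE
  have hSeq : ∀ z : Fin n → ℝ,
      sSup ((fun x : Fin n → ℝ => (((x - z) ⬝ᵥ (x - z) : ℝ) : EReal)) '' Omega15 n p a r)
        = (((DEfun' n p a r (iotaE' z)) ^ 2 : ℝ) : EReal) := by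
    intro z
    rw [SetE_coe' hx₀ i₀ z, FA_eq_DE' hx₀ i₀ z]
  have hmin : ∀ z : Fin n → ℝ, DEfun' n p a r (iotaE' zbar) ≤ DEfun' n p a r (iotaE' z) := by
    intro z
    rw [hzbarι]
    exact hzE _
  -- part 1
  have hpart1 : sSup ((fun x : Fin n → ℝ => (((x - zbar) ⬝ᵥ (x - zbar) : ℝ) : EReal)) ''
      Omega15 n p a r) ≤ vDCC n p a r := by
    refine le_sInf ?_
    rintro e ⟨z, rfl⟩
    refine le_trans ?_ (key_le' hx₀ i₀ z)
    rw [hSeq zbar, hSeq z]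
    exact EReal.coe_le_coe_iff.2 (pow_le_pow_left₀ (DE_nonneg' hx₀ i₀ _) (hmin z) 2)
  have hpart2 : vCC n p a r ≤
      sSup ((fun x : Fin n → ℝ => (((x - zbar) ⬝ᵥ (x - zbar) : ℝ) : EReal)) ''
        Omega15 n p a r) := sInf_le ⟨zbar, rfl⟩
  refine ⟨zbar, hpart1, hpart2, ?_⟩
  -- part 3
  have hvD_ge0 : (0 : EReal) ≤ vDCC n p a r := by
    refine le_sInf ?_
    rintro e ⟨z, rfl⟩
    refine le_trans ?_ (key_le' hx₀ i₀ z)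
    rw [hSeq z]
    exact EReal.coe_le_coe_iff.2 (sq_nonneg _)
  have hγ0 : 0 ≤ gamma15 n p a r := gamma_nonneg' hp a hr x₀
  have hγ1 : gamma15 n p a r ≤ 1 := gamma_le_one' hp hr hx₀s
  have hsqrt2 : (1 : ℝ) ≤ Real.sqrt 2 := by
    rw [show (1:ℝ) = Real.sqrt 1 by simp]
    exact Real.sqrt_le_sqrt (by norm_num)
  have hq1 : (1:ℝ) ≤ (Real.sqrt 2 + gamma15 n p a r) ^ 2 := by nlinarith
  have hc_le : ((1 - gamma15 n p a r) / (Real.sqrt 2 + gamma15 n p a r)) ^ 2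
      ≤ (1 - gamma15 n p a r) ^ 2 := by
    rw [div_pow]
    exact div_le_self (sq_nonneg _) hq1
  have hc0 : 0 ≤ ((1 - gamma15 n p a r) / (Real.sqrt 2 + gamma15 n p a r)) ^ 2 := sq_nonneg _
  rcases Nat.eq_zero_or_pos n with hn | hn
  · -- degenerate case `n = 0`
    haveI : IsEmpty (Fin n) := by rw [hn]; infer_instance
    have hdot0 : ∀ x y : Fin n → ℝ, x ⬝ᵥ y = 0 := by
      intro x y
      simp [dotProduct, Finset.univ_eq_empty]
    have hfeas : ((0:ℝ), (fun _ => (0:ℝ) : Fin p → ℝ)) ∈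
        {q : ℝ × (Fin p → ℝ) | (∀ i, 0 ≤ q.2 i) ∧
          (blockMat ((-1 + ∑ i, q.2 i) • (1 : Matrix (Fin n) (Fin n) ℝ))
              ((0 : Fin n → ℝ) - ∑ i, q.2 i • a i)
              (q.1 + ∑ i, q.2 i * (a i ⬝ᵥ a i - (r i) ^ 2))).PosSemidef} := by
      refine ⟨fun i => le_rfl, ?_⟩
      have eM : ((-1 + ∑ _i : Fin p, (0:ℝ)) • (1 : Matrix (Fin n) (Fin n) ℝ))
          = (0:ℝ) • (1 : Matrix (Fin n) (Fin n) ℝ) :=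
        Matrix.ext fun i _ => isEmptyElim i
      have ev : ((0 : Fin n → ℝ) - ∑ i, (0:ℝ) • a i) = ((-(0:ℝ)) • (0 : Fin n → ℝ)) :=
        funext fun i => isEmptyElim i
      have ec : ((0:ℝ) + ∑ i : Fin p, (0:ℝ) * (a i ⬝ᵥ a i - (r i) ^ 2))
          = (0:ℝ) * ((0 : Fin n → ℝ) ⬝ᵥ (0 : Fin n → ℝ)) := by simp
      simp only
      rw [eM, ev, ec]
      exact psdCert' 0 le_rfl 0
    have h1 : vSDPz n p a r 0 ≤ ((0:ℝ) : EReal) := sInf_le ⟨_, hfeas, rfl⟩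
    have h2 : vDCC n p a r ≤ vSDPz n p a r 0 + (((0 : Fin n → ℝ) ⬝ᵥ (0 : Fin n → ℝ) : ℝ) : EReal) :=
      sInf_le ⟨0, rfl⟩
    have h3 : vDCC n p a r ≤ 0 := by
      refine le_trans h2 ?_
      rw [hdot0]
      calc vSDPz n p a r 0 + ((0:ℝ) : EReal) ≤ ((0:ℝ) : EReal) + ((0:ℝ) : EReal) :=
            add_le_add_left h1 _
        _ = 0 := by norm_num
    have hD0 : vDCC n p a r = 0 := le_antisymm h3 hvD_ge0
    have hvCC0 : (0 : EReal) ≤ vCC n p a r := by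
      refine le_sInf ?_
      rintro e ⟨z, rfl⟩
      show (0 : EReal) ≤ sSup ((fun x : Fin n → ℝ =>
        (((x - z) ⬝ᵥ (x - z) : ℝ) : EReal)) '' Omega15 n p a r)
      rw [hSeq z]
      exact EReal.coe_le_coe_iff.2 (sq_nonneg _)
    rw [hD0, mul_zero]
    exact hvCC0
  · -- main case `n > 0`
    have hvD_le := vDCC_le_r' a hr i₀
    have hnetop : vDCC n p a r ≠ ⊤ := (lt_of_le_of_lt hvD_le (EReal.coe_lt_top _)).ne
    have hnebot : vDCC n p a r ≠ ⊥ := by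
      intro h
      rw [h] at hvD_ge0
      simp at hvD_ge0
    have hd : ((vDCC n p a r).toReal : EReal) = vDCC n p a r :=
      EReal.coe_toReal hnetop hnebot
    set d := (vDCC n p a r).toReal with hddef
    have hd_le : d ≤ r i₀ ^ 2 := by
      refine EReal.coe_le_coe_iff.1 ?_
      rw [hd]
      exact hvD_le
    have hd0 : 0 ≤ d := by
      refine EReal.coe_le_coe_iff.1 ?_
      rw [EReal.coe_zero, hd]
      exact hvD_ge0
    have hvCC_low : ((((1 - gamma15 n p a r) * r i₀) ^ 2 : ℝ) : EReal) ≤ vCC n p a r := by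
      refine le_sInf ?_
      rintro e ⟨z, rfl⟩
      show _ ≤ sSup ((fun x : Fin n → ℝ =>
        (((x - z) ⬝ᵥ (x - z) : ℝ) : EReal)) '' Omega15 n p a r)
      rw [hSeq z]
      refine EReal.coe_le_coe_iff.2 ?_
      refine pow_le_pow_left₀ (mul_nonneg (by linarith) (hr i₀).le) ?_ 2
      exact D_low' hp hn hr i₀ hi₀ hx₀ (iotaE' z)
    rw [← hd, ← EReal.coe_mul]
    refine le_trans ?_ hvCC_low
    refine EReal.coe_le_coe_iff.2 ?_
    have hstep1 : ((1 - gamma15 n p a r) / (Real.sqrt 2 + gamma15 n p a r)) ^ 2 * d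
        ≤ (1 - gamma15 n p a r) ^ 2 * (r i₀ ^ 2) :=
      mul_le_mul hc_le hd_le hd0 (sq_nonneg _)
    calc ((1 - gamma15 n p a r) / (Real.sqrt 2 + gamma15 n p a r)) ^ 2 * d
        ≤ (1 - gamma15 n p a r) ^ 2 * (r i₀ ^ 2) := hstep1
      _ = ((1 - gamma15 n p a r) * r i₀) ^ 2 := by rw [mul_pow]

end
end
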